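/- Let GHZ₄^± = (|0000⟩ ± |1111⟩)/√2 be 4-qubit states (unit vectors indexed by Fin 4 → Fin 2), and let ρ = (3/4)|GHZ₄⁺⟩⟨GHZ₄⁺| + (1/4)|GHZ₄⁻⟩⟨GHZ₄⁻|. Then tr ρ² = 5/8, and for every subsystem i : Fin 4 the one-qubit reduced density matrix ρ_i equals (1/2)·I₂, so tr (ρ_i)² = 1/2 < tr ρ². Consequently ρ is genuinely multipartite entangled: for every nonempty proper subset S of Fin 4, ρ is not separable across the bipartition (S, Sᶜ). -/

import Mathlib

open scoped ComplexOrder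

noncomputable section

/-- Extend an assignment `g` on the indices other than `j` by the value `x` at position `j`. -/
def insertAt {N d : ℕ} (j : Fin N) (x : Fin d) (g : {i : Fin N // i ≠ j} → Fin d) :
    Fin N → Fin d :=
  fun i => if h : i = j then x else g ⟨i, h⟩

/-- The one-qudit reduced density matrix at site `j`. -/
def reduced {N d : ℕ} (ρ : Matrix (Fin N → Fin d) (Fin N → Fin d) ℂ) (j : Fin N) :
    Matrix (Fin d) (Fin d) ℂ :=
  Matrix.of fun x y => ∑ g : {i : Fin N // i ≠ j} → Fin d,
    ρ (insertAt j x g) (insertAt j y g)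

/-- The pure-state density matrix `|Φ⟩⟨Φ|`. -/
def pureMat {α : Type*} (Φ : α → ℂ) : Matrix α α ℂ :=
  Matrix.of fun a b => Φ a * (starRingEnd ℂ) (Φ b)

/-- Separability of an `N`-partite state across the bipartition `(S, Sᶜ)`. -/
def SepAcross {N d : ℕ} (S : Finset (Fin N))
    (ρ : Matrix (Fin N → Fin d) (Fin N → Fin d) ℂ) : Prop :=
  ∃ (m : ℕ) (p : Fin m → ℝ)
    (A : Fin m → Matrix ({i : Fin N // i ∈ S} → Fin d) ({i : Fin N // i ∈ S} → Fin d) ℂ)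
    (B : Fin m → Matrix ({i : Fin N // i ∉ S} → Fin d) ({i : Fin N // i ∉ S} → Fin d) ℂ),
    (∀ i, 0 ≤ p i) ∧ (∑ i, p i = 1) ∧
    (∀ i, (A i).PosSemidef ∧ (A i).trace = 1) ∧
    (∀ i, (B i).PosSemidef ∧ (B i).trace = 1) ∧
    (∀ a b : Fin N → Fin d,
      ρ a b = ∑ i, (p i : ℂ)
        * A i (fun k => a k.1) (fun k => b k.1)
        * B i (fun k => a k.1) (fun k => b k.1))

/-- The 4-qubit GHZ state `GHZ₄⁺ = (|0000⟩ + |1111⟩)/√2`. -/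
def ghz4p : (Fin 4 → Fin 2) → ℂ :=
  fun a => if a = (fun _ => 0) then (Real.sqrt 2 : ℂ)⁻¹
    else if a = (fun _ => 1) then (Real.sqrt 2 : ℂ)⁻¹ else 0

/-- The 4-qubit GHZ state `GHZ₄⁻ = (|0000⟩ − |1111⟩)/√2`. -/
def ghz4m : (Fin 4 → Fin 2) → ℂ :=
  fun a => if a = (fun _ => 0) then (Real.sqrt 2 : ℂ)⁻¹
    else if a = (fun _ => 1) then -(Real.sqrt 2 : ℂ)⁻¹ else 0

/-! ### Auxiliary lemmas -/

lemma aux_psd_diag_nonneg {n : Type*} [Fintype n] (M : Matrix n n ℂ) (hM : M.PosSemidef)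
    (a : n) : 0 ≤ M a a := by
  obtain ⟨B, rfl⟩ : ∃ B : Matrix n n ℂ, M = Matrix.conjTranspose B * B := by
    classical
    open scoped MatrixOrder Matrix.Norms.L2Operator in
    exact CStarAlgebra.nonneg_iff_eq_star_mul_self.mp hM.nonneg
  rw [Matrix.mul_apply]
  exact Finset.sum_nonneg fun k _ => by
    simpa [Matrix.conjTranspose_apply] using star_mul_self_nonneg (B k a)

lemma aux_psd_zero_of_diag {n : Type*} [Fintype n] (M : Matrix n n ℂ) (hM : M.PosSemidef)
    (a b : n) (ha : M a a = 0) : M b a = 0 := by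
  obtain ⟨B, rfl⟩ : ∃ B : Matrix n n ℂ, M = Matrix.conjTranspose B * B := by
    classical
    open scoped MatrixOrder Matrix.Norms.L2Operator in
    exact CStarAlgebra.nonneg_iff_eq_star_mul_self.mp hM.nonneg
  rw [Matrix.mul_apply] at ha ⊢
  simp only [Matrix.conjTranspose_apply] at ha ⊢
  have hz : ∀ k, star (B k a) * B k a = 0 := by
    intro k
    exact (Finset.sum_eq_zero_iff_of_nonneg
      (fun k _ => star_mul_self_nonneg (B k a))).mp ha k (Finset.mem_univ k)
  have hB0 : ∀ k, B k a = 0 := fun k => by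
    have h2 : Complex.normSq (star (B k a) * B k a) = 0 := by rw [hz k]; simp
    have := Complex.normSq_eq_zero.mp (by simpa [Complex.normSq_mul] using h2)
    tauto
  exact Finset.sum_eq_zero fun k _ => by rw [hB0 k, mul_zero]

lemma aux_h01 : (fun _ : Fin 4 => (0:Fin 2)) ≠ (fun _ => 1) := by
  intro h; exact absurd (congrFun h 0) (by decide)

lemma aux_hs : ((Real.sqrt 2 :ℝ): ℂ)⁻¹ * ((Real.sqrt 2:ℝ) : ℂ)⁻¹ = 2⁻¹ := by
  rw [← mul_inv, ← Complex.ofReal_mul, Real.mul_self_sqrt (by norm_num)]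
  norm_num

lemma aux_rho_eq (ρ : Matrix (Fin 4 → Fin 2) (Fin 4 → Fin 2) ℂ)
    (hρ : ρ = (3 / 4 : ℂ) • pureMat ghz4p + (1 / 4 : ℂ) • pureMat ghz4m)
    (a b : Fin 4 → Fin 2) :
    ρ a b = if a = (fun _ => 0) ∧ b = (fun _ => 0) then 2⁻¹
      else if a = (fun _ => 1) ∧ b = (fun _ => 1) then 2⁻¹
      else if a = (fun _ => 0) ∧ b = (fun _ => 1) then 4⁻¹
      else if a = (fun _ => 1) ∧ b = (fun _ => 0) then 4⁻¹ else 0 := by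
  subst hρ
  simp only [Matrix.add_apply, Matrix.smul_apply, pureMat, ghz4p, ghz4m, Matrix.of_apply,
    smul_eq_mul]
  by_cases ha0 : a = (fun _ => 0) <;> by_cases ha1 : a = (fun _ => 1) <;>
    by_cases hb0 : b = (fun _ => 0) <;> by_cases hb1 : b = (fun _ => 1) <;>
    simp_all [aux_h01, map_inv₀, Complex.conj_ofReal] <;>
    first
      | linear_combination aux_hs
      | linear_combination (1/2 : ℂ) * aux_hs

lemma aux_sum_pair_support {α : Type*} [Fintype α] [DecidableEq α] (c0 c1 : α) (h : c0 ≠ c1)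
    (f : α → ℂ) (hf : ∀ a, a ≠ c0 → a ≠ c1 → f a = 0) :
    ∑ a, f a = f c0 + f c1 := by
  rw [← Finset.sum_pair h]
  exact (Finset.sum_subset (Finset.subset_univ _)
    (fun x _ hx => hf x (fun h => hx (by simp [h])) (fun h => hx (by simp [h])))).symm

lemma aux_insert_eq_const (j : Fin 4) (x v : Fin 2) (g : {i : Fin 4 // i ≠ j} → Fin 2) :
    insertAt j x g = (fun _ => v) ↔ x = v ∧ g = (fun _ => v) := by
  constructor
  · intro h
    refine ⟨by simpa [insertAt] using congrFun h j, funext fun i => ?_⟩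
    have := congrFun h i.1
    simpa [insertAt, i.2] using this
  · rintro ⟨rfl, rfl⟩
    funext i
    by_cases h : i = j <;> simp [insertAt, h]

/-- The mixture `ρ = (3/4)|GHZ₄⁺⟩⟨GHZ₄⁺| + (1/4)|GHZ₄⁻⟩⟨GHZ₄⁻|` has purity `5/8`, all of
its one-qubit reductions are maximally mixed (purity `1/2 < 5/8`), and it is genuinely
multipartite entangled: not separable across any nontrivial bipartition. -/
theorem ghz4_mixture_genuinely_entangled
    (ρ : Matrix (Fin 4 → Fin 2) (Fin 4 → Fin 2) ℂ)
    (hρ : ρ = (3 / 4 : ℂ) • pureMat ghz4p + (1 / 4 : ℂ) • pureMat ghz4m) :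
    ((ρ * ρ).trace = 5 / 8) ∧
    (∀ i : Fin 4, reduced ρ i = (2 : ℂ)⁻¹ • 1) ∧
    (∀ i : Fin 4, (reduced ρ i * reduced ρ i).trace = (2 : ℂ)⁻¹ ∧
      (reduced ρ i * reduced ρ i).trace < (ρ * ρ).trace) ∧
    (∀ S : Finset (Fin 4), S.Nonempty → S ≠ Finset.univ → ¬ SepAcross S ρ) := by
  have hr := aux_rho_eq ρ hρ
  set c0 : Fin 4 → Fin 2 := fun _ => 0 with hc0
  set c1 : Fin 4 → Fin 2 := fun _ => 1 with hc1
  have h10 : c1 ≠ c0 := Ne.symm aux_h01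
  have hz : ∀ a b, a ≠ c0 → a ≠ c1 → ρ a b = 0 := fun a b h1 h2 => by
    rw [hr]; simp [h1, h2]
  have hz' : ∀ a b, b ≠ c0 → b ≠ c1 → ρ a b = 0 := fun a b h1 h2 => by
    rw [hr]; simp [h1, h2]
  have e00 : ρ c0 c0 = 2⁻¹ := by rw [hr]; simp
  have e11 : ρ c1 c1 = 2⁻¹ := by rw [hr]; simp [h10]
  have h01' : c0 ≠ c1 := aux_h01
  have e01 : ρ c0 c1 = 4⁻¹ := by rw [hr]; simp [h01', h10]
  have e10 : ρ c1 c0 = 4⁻¹ := by rw [hr]; simp [h01', h10]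
  -- purity
  have htrace : (ρ * ρ).trace = 5 / 8 := by
    rw [Matrix.trace]
    have := aux_sum_pair_support c0 c1 h01' (fun a => (ρ * ρ).diag a)
      (fun a h1 h2 => by
        simp only [Matrix.diag_apply, Matrix.mul_apply]
        exact Finset.sum_eq_zero fun b _ => by rw [hz a b h1 h2, zero_mul])
    rw [this]
    simp only [Matrix.diag_apply, Matrix.mul_apply]
    rw [aux_sum_pair_support c0 c1 h01' (fun b => ρ c0 b * ρ b c0)
        (fun b h1 h2 => by show ρ c0 b * ρ b c0 = 0; rw [hz' c0 b h1 h2, zero_mul]),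
      aux_sum_pair_support c0 c1 h01' (fun b => ρ c1 b * ρ b c1)
        (fun b h1 h2 => by show ρ c1 b * ρ b c1 = 0; rw [hz' c1 b h1 h2, zero_mul]),
      e00, e01, e10, e11]
    norm_num
  -- reduced matrices
  have hred : ∀ i : Fin 4, reduced ρ i = (2 : ℂ)⁻¹ • 1 := by
    intro j
    have hwit : (⟨j.succAbove 0, Fin.succAbove_ne j 0⟩ : {i : Fin 4 // i ≠ j}) =
      (⟨j.succAbove 0, Fin.succAbove_ne j 0⟩ : {i : Fin 4 // i ≠ j}) := rfl
    have hne : (fun _ : {i : Fin 4 // i ≠ j} => (0:Fin 2)) ≠ (fun _ => 1) := by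
      intro h
      exact absurd (congrFun h ⟨j.succAbove 0, Fin.succAbove_ne j 0⟩) (by decide)
    have hconj : ∀ x : {i : Fin 4 // i ≠ j} → Fin 2,
        ¬(x = (fun _ => (0:Fin 2)) ∧ x = (fun _ => 1)) := by
      rintro x ⟨rfl, h2⟩; exact hne h2
    have hconj' : ∀ x : {i : Fin 4 // i ≠ j} → Fin 2,
        ¬(x = (fun _ => (1:Fin 2)) ∧ x = (fun _ => 0)) := by
      rintro x ⟨rfl, h2⟩; exact hne h2.symm
    ext x y
    fin_cases x <;> fin_cases y <;>
      simp only [reduced, Matrix.of_apply, Matrix.smul_apply, Matrix.one_apply] <;>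
      rw [Finset.sum_congr rfl (fun g _ => hr (insertAt j _ g) (insertAt j _ g))] <;>
      simp [aux_insert_eq_const, hc0, hc1, hne, Ne.symm hne, hconj, hconj', Finset.sum_ite_eq',
        show (0:Fin 2) ≠ 1 by decide, show (1:Fin 2) ≠ 0 by decide]
  refine ⟨htrace, hred, fun i => ?_, ?_⟩
  · constructor
    · rw [hred i]
      simp [Matrix.trace, Matrix.mul_apply, Matrix.one_apply, Fin.sum_univ_two]
    · rw [hred i, htrace]
      have h2 : ((2:ℂ)⁻¹ • (1 : Matrix (Fin 2) (Fin 2) ℂ) * (2:ℂ)⁻¹ • 1).trace = 2⁻¹ := by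
        simp [Matrix.trace, Matrix.mul_apply, Matrix.one_apply, Fin.sum_univ_two]
      rw [h2]
      have : ((2⁻¹:ℝ):ℂ) < ((5/8:ℝ):ℂ) := by
        exact_mod_cast (by norm_num : (2⁻¹:ℝ) < 5/8)
      simpa using this
  -- non-separability
  · rintro S hSne hSuniv ⟨m, p, A, B, hp, hsum, hA, hB, hrep⟩
    classical
    set c : Fin 4 → Fin 2 := fun k => if k ∈ S then 0 else 1 with hc
    obtain ⟨k₀, hk₀⟩ := hSne
    obtain ⟨k₁, hk₁⟩ : ∃ k, k ∉ S := by
      by_contra h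
      push_neg at h
      exact hSuniv (Finset.eq_univ_iff_forall.mpr h)
    have hcne0 : c ≠ c0 := fun h => by
      have := congrFun h k₁
      simp [hc, hk₁, hc0] at this
    have hcne1 : c ≠ c1 := fun h => by
      have := congrFun h k₀
      simp [hc, hk₀, hc1] at this
    have hccz : ρ c c = 0 := hz c c hcne0 hcne1
    have hcS : (fun k : {i : Fin 4 // i ∈ S} => c k.1) = (fun _ => (0:Fin 2)) := by
      funext k; simp [hc, k.2]
    have hcSc : (fun k : {i : Fin 4 // i ∉ S} => c k.1) = (fun _ => (1:Fin 2)) := by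
      funext k; simp [hc, k.2]
    have hc0S : (fun k : {i : Fin 4 // i ∈ S} => c0 k.1) = (fun _ => (0:Fin 2)) := rfl
    have hc0Sc : (fun k : {i : Fin 4 // i ∉ S} => c0 k.1) = (fun _ => (0:Fin 2)) := rfl
    have hc1S : (fun k : {i : Fin 4 // i ∈ S} => c1 k.1) = (fun _ => (1:Fin 2)) := rfl
    have hc1Sc : (fun k : {i : Fin 4 // i ∉ S} => c1 k.1) = (fun _ => (1:Fin 2)) := rfl
    -- each term in the diagonal expansion vanishes
    have hdiag := hrep c c
    rw [hccz] at hdiag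
    rw [show (fun k : {i : Fin 4 // i ∈ S} => c k.1) = (fun _ => (0:Fin 2)) from hcS,
      show (fun k : {i : Fin 4 // i ∉ S} => c k.1) = (fun _ => (1:Fin 2)) from hcSc] at hdiag
    have hterm_nonneg : ∀ i : Fin m, (0:ℂ) ≤ (p i : ℂ)
        * A i (fun _ => 0) (fun _ => 0) * B i (fun _ => 1) (fun _ => 1) := by
      intro i
      refine mul_nonneg (mul_nonneg ?_ ?_) ?_
      · exact_mod_cast hp i
      · exact aux_psd_diag_nonneg _ (hA i).1 _
      · exact aux_psd_diag_nonneg _ (hB i).1 _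
    have hterm_zero : ∀ i : Fin m, (p i : ℂ)
        * A i (fun _ => 0) (fun _ => 0) * B i (fun _ => 1) (fun _ => 1) = 0 := by
      intro i
      exact (Finset.sum_eq_zero_iff_of_nonneg (fun i _ => hterm_nonneg i)).mp
        hdiag.symm i (Finset.mem_univ i)
    -- off-diagonal entry
    have hoff := hrep c0 c1
    rw [e01] at hoff
    rw [show (fun k : {i : Fin 4 // i ∈ S} => c0 k.1) = (fun _ => (0:Fin 2)) from rfl,
      show (fun k : {i : Fin 4 // i ∉ S} => c0 k.1) = (fun _ => (0:Fin 2)) from rfl,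
      show (fun k : {i : Fin 4 // i ∈ S} => c1 k.1) = (fun _ => (1:Fin 2)) from rfl,
      show (fun k : {i : Fin 4 // i ∉ S} => c1 k.1) = (fun _ => (1:Fin 2)) from rfl] at hoff
    have hoff0 : ∀ i : Fin m, (p i : ℂ)
        * A i (fun _ => 0) (fun _ => 1) * B i (fun _ => 0) (fun _ => 1) = 0 := by
      intro i
      rcases mul_eq_zero.mp (hterm_zero i) with h | hB1
      · rcases mul_eq_zero.mp h with hp0 | hA0
        · rw [hp0]; ring
        · have h1 : A i (fun _ => 1) (fun _ => 0) = 0 :=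
            aux_psd_zero_of_diag _ (hA i).1 (fun _ => 0) (fun _ => 1) hA0
          have h2 : A i (fun _ => 0) (fun _ => 1) = 0 := by
            have h3 := congrFun (congrFun (hA i).1.1 (fun _ => (0:Fin 2))) (fun _ => (1:Fin 2))
            rw [Matrix.conjTranspose_apply, h1] at h3
            simpa using h3.symm
          rw [h2]; ring
      · have := aux_psd_zero_of_diag _ (hB i).1 _ (fun _ => (0:Fin 2)) hB1
        rw [this]; ring
    rw [Finset.sum_congr rfl (fun i _ => hoff0 i)] at hoff
    simp at hoff
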